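/- Let H be a Hilbert space, W ⊂ H a closed subspace, and a_1,…,a_m ∈ W. Let G be the m×m Gramian matrix G_{kl} = ⟨a_k, a_l⟩ with eigenvalues λ_1 ≥ ⋯ ≥ λ_m ≥ 0. Then for every subspace S ⊆ H with dim S ≤ ℓ, one has Σ_{j=1}^m ‖a_j − P_S a_j‖² ≥ Σ_{s=ℓ+1}^m λ_s, and equality is attained by the span of the vectors q_s = λ_s^{−1/2} Σ_{k=1}^m y_s(k) a_k for s with λ_s ≠ 0, where y_1,…,y_m are orthonormal eigenvectors of the conjugate-transposed Gramian corresponding to λ_1,…,λ_m. -/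

import Mathlib

open InnerProductSpace Matrix

/-- If `x = v + r` with `v ∈ K` and `r ⊥ K`, then `infDist x K = ‖r‖`. -/
lemma stmt6_infDist_eq {H : Type*} [NormedAddCommGroup H] [InnerProductSpace ℂ H]
    (K : Submodule ℂ H) (x r v : H) (hv : v ∈ K) (hx : x = v + r)
    (hr : ∀ u ∈ K, ⟪u, r⟫_ℂ = 0) : Metric.infDist x (K : Set H) = ‖r‖ := by
  have hne : (K : Set H).Nonempty := ⟨0, K.zero_mem⟩
  have key : ∀ w ∈ K, ‖r‖ ≤ dist x w := by
    intro w hw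
    have horth : ⟪r, v - w⟫_ℂ = 0 := by
      have := hr _ (K.sub_mem hv hw)
      simpa using congrArg (starRingEnd ℂ) this
    have hxw : x - w = r + (v - w) := by rw [hx]; abel
    have hsq : ‖x - w‖ ^ 2 = ‖r‖ ^ 2 + ‖v - w‖ ^ 2 := by
      rw [hxw]
      have := norm_add_sq_eq_norm_sq_add_norm_sq_of_inner_eq_zero r (v - w) horth
      ring_nf
      ring_nf at this
      linarith
    have h1 : (0:ℝ) ≤ ‖x - w‖ := norm_nonneg _
    have h2 : (0:ℝ) ≤ ‖r‖ := norm_nonneg _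
    have h3 : (0:ℝ) ≤ ‖v - w‖ ^ 2 := sq_nonneg _
    rw [dist_eq_norm]
    nlinarith
  refine le_antisymm ?_ ?_
  · calc Metric.infDist x (K : Set H) ≤ dist x v := Metric.infDist_le_dist_of_mem hv
      _ = ‖r‖ := by rw [dist_eq_norm, hx]; simp
  · by_contra hlt
    push_neg at hlt
    obtain ⟨w, hw, hwd⟩ := (Metric.infDist_lt_iff hne).1 hlt
    exact absurd hwd (not_lt.2 (key w hw))

/-- Eckart–Young in Hilbert space: with `G` the Gramian of `a_1,…,a_m ∈ W`,
eigenvalues `λ_1 ≥ ⋯ ≥ λ_m ≥ 0` and orthonormal eigenvectors `y_s` of the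
conjugate-transposed Gramian, every subspace `S` with `dim S ≤ ℓ` satisfies
`∑_j ‖a_j − P_S a_j‖² ≥ ∑_{s=ℓ+1}^m λ_s`, and equality is attained by
`S* = span{q_1,…,q_ℓ}` where `q_s = λ_s^{-1/2} ∑_k y_s(k) a_k` (and `q_s = 0` if
`λ_s = 0`).  Here `‖a − P_S a‖` is written as the distance from `a` to `S`. -/
theorem stmt6 {H : Type*} [NormedAddCommGroup H] [InnerProductSpace ℂ H] [CompleteSpace H]
    (m ℓ : ℕ) (hℓm : ℓ ≤ m)
    (W : Submodule ℂ H) (hWclosed : IsClosed (W : Set H))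
    (a : Fin m → H) (ha : ∀ j, a j ∈ W)
    (G : Matrix (Fin m) (Fin m) ℂ) (hG : ∀ k l, G k l = ⟪a k, a l⟫_ℂ)
    (lam : Fin m → ℝ) (hdec : Antitone lam) (hnonneg : ∀ s, 0 ≤ lam s)
    (y : Fin m → EuclideanSpace ℂ (Fin m)) (hy : Orthonormal ℂ y)
    (heig : ∀ s, G.conjTranspose *ᵥ (y s) = (lam s : ℂ) • (y s))
    (q : Fin m → H)
    (hq : ∀ s, q s = if lam s = 0 then 0
        else ((Real.sqrt (lam s))⁻¹ : ℝ) • ∑ k, y s k • a k) :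
    (∀ S : Submodule ℂ H, Module.rank ℂ S ≤ (ℓ : Cardinal) →
        ∑ s ∈ Finset.univ.filter (fun s : Fin m => ℓ ≤ (s : ℕ)), lam s
          ≤ ∑ j, (Metric.infDist (a j) (S : Set H)) ^ 2) ∧
    ∑ j, (Metric.infDist (a j)
        ((Submodule.span ℂ (Set.range fun s : Fin ℓ => q (Fin.castLE hℓm s)) : Submodule ℂ H)
          : Set H)) ^ 2
      = ∑ s ∈ Finset.univ.filter (fun s : Fin m => ℓ ≤ (s : ℕ)), lam s := by
  classical
  set b : Fin m → H := fun s => ∑ k, y s k • a k with hbdef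
  -- the Gramian is Hermitian, so `y` are genuine eigenvectors of `G`
  have hGH : G.conjTranspose = G := by
    ext k l
    simp only [Matrix.conjTranspose_apply, hG]
    exact inner_conj_symm (a k) (a l)
  have hGmul : ∀ t, G *ᵥ y t = (lam t : ℂ) • y t := fun t => by rw [← hGH]; exact heig t
  have hyy : ∀ s t, ⟪y s, y t⟫_ℂ = if s = t then 1 else 0 := fun s t => by
    rcases eq_or_ne s t with rfl | h
    · simp [inner_self_eq_norm_sq_to_K, hy.1 s]
    · simp [h, hy.2 h]
  -- inner products of the vectors b
  have hbb : ∀ s t, ⟪b s, b t⟫_ℂ = if s = t then (lam t : ℂ) else 0 := by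
    intro s t
    have h1 : ⟪b s, b t⟫_ℂ = ∑ k, (starRingEnd ℂ) (y s k) * ((G *ᵥ y t) k) := by
      simp only [hbdef, sum_inner, inner_sum, inner_smul_left, inner_smul_right,
        Matrix.mulVec, dotProduct, hG, Finset.mul_sum]
      rw [Finset.sum_comm]
      exact Finset.sum_congr rfl fun k _ => Finset.sum_congr rfl fun l _ => by ring
    rw [h1, hGmul t]
    have h2 : ∑ k, (starRingEnd ℂ) (y s k) * (((lam t : ℂ) • (y t).ofLp) k)
        = (lam t : ℂ) * ⟪y s, y t⟫_ℂ := by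
      simp only [Pi.smul_apply, PiLp.smul_apply, smul_eq_mul, Finset.mul_sum]
      rw [PiLp.inner_apply]
      simp only [RCLike.inner_apply, Finset.mul_sum]
      exact Finset.sum_congr rfl fun k _ => by ring
    rw [h2, hyy s t]
    split <;> simp
  -- completeness relation of the orthonormal basis y
  have hcomp : ∀ j k : Fin m, (∑ s, (starRingEnd ℂ) (y s j) * y s k)
      = if j = k then 1 else 0 := by
    set Y : Matrix (Fin m) (Fin m) ℂ := Matrix.of fun s k => y s k with hY
    have hYY : Y * Y.conjTranspose = 1 := by
      ext s t
      have := hyy t s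
      rw [PiLp.inner_apply] at this
      simp only [RCLike.inner_apply] at this
      simp only [Matrix.mul_apply, Matrix.conjTranspose_apply, Matrix.one_apply, hY,
        Matrix.of_apply]
      rw [show (∑ k, y s k * star (y t k)) = ∑ k, y s k * (starRingEnd ℂ) (y t k) from
        Finset.sum_congr rfl fun k _ => by rw [starRingEnd_apply], this]
      simp [eq_comm]
    have hYY2 : Y.conjTranspose * Y = 1 := mul_eq_one_comm.mp hYY
    intro j k
    have := congrFun (congrFun hYY2 j) k
    simpa [Matrix.mul_apply, Matrix.conjTranspose_apply, Matrix.one_apply, hY] using this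
  -- expansion of a j in terms of the b s
  have haexp : ∀ j, a j = ∑ s, (starRingEnd ℂ) (y s j) • b s := by
    intro j
    have h1 : ∑ s, (starRingEnd ℂ) (y s j) • b s
        = ∑ k, (∑ s, (starRingEnd ℂ) (y s j) * y s k) • a k := by
      simp only [hbdef, Finset.smul_sum, smul_smul]
      rw [Finset.sum_comm]
      simp [Finset.sum_smul]
    rw [h1]
    simp [hcomp, ite_smul]
  -- inner products of linear combinations of the b s
  have hcombo : ∀ (T T' : Finset (Fin m)) (c d : Fin m → ℂ),
      ⟪∑ s ∈ T, c s • b s, ∑ t ∈ T', d t • b t⟫_ℂ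
        = ∑ s ∈ T ∩ T', (starRingEnd ℂ) (c s) * d s * (lam s : ℂ) := by
    intro T T' c d
    rw [sum_inner]
    have h1 : ∀ s ∈ T, ⟪c s • b s, ∑ t ∈ T', d t • b t⟫_ℂ
        = if s ∈ T' then (starRingEnd ℂ) (c s) * d s * (lam s : ℂ) else 0 := by
      intro s _
      rw [inner_smul_left, inner_sum]
      have h2 : ∀ t ∈ T', ⟪b s, d t • b t⟫_ℂ = if s = t then d t * (lam t : ℂ) else 0 :=
        fun t _ => by rw [inner_smul_right, hbb]; split <;> simp
      rw [Finset.sum_congr rfl h2, Finset.sum_ite_eq T' s (fun t => d t * (lam t : ℂ)),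
        mul_ite, mul_zero]
      split <;> ring
    rw [Finset.sum_congr rfl h1, Finset.sum_ite_mem]
  -- norms of linear combinations of the b s
  have hnorm : ∀ (T : Finset (Fin m)) (c : Fin m → ℂ),
      ‖∑ s ∈ T, c s • b s‖ ^ 2 = ∑ s ∈ T, ‖c s‖ ^ 2 * lam s := by
    intro T c
    rw [norm_sq_eq_re_inner (𝕜 := ℂ), hcombo T T c c, Finset.inter_self]
    rw [map_sum]
    refine Finset.sum_congr rfl fun s _ => ?_
    rw [Complex.conj_mul']
    rw [show ((‖c s‖ : ℂ))^2 * ((lam s : ℝ) : ℂ) = (((‖c s‖^2 * lam s : ℝ)) : ℂ) by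
      push_cast; ring]
    exact Complex.ofReal_re _
  -- b s is √(lam s) times q s
  have hbq : ∀ s, b s = ((Real.sqrt (lam s) : ℝ) : ℂ) • q s := by
    intro s
    by_cases h0 : lam s = 0
    · have hb2 : ‖b s‖ ^ 2 = 0 := by
        rw [norm_sq_eq_re_inner (𝕜 := ℂ), hbb s s]
        simp [h0]
      have hb0 : b s = 0 := by
        rw [pow_eq_zero_iff (two_ne_zero)] at hb2
        exact norm_eq_zero.mp hb2
      simp [hq s, h0, hb0]
    · rw [hq s]
      simp only [h0, if_false]
      have hne : Real.sqrt (lam s) ≠ 0 :=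
        Real.sqrt_ne_zero'.mpr (lt_of_le_of_ne (hnonneg s) (Ne.symm h0))
      rw [show (((Real.sqrt (lam s))⁻¹ : ℝ) • (∑ k, y s k • a k) : H)
            = ((((Real.sqrt (lam s))⁻¹ : ℝ) : ℂ)) • (∑ k, y s k • a k) from
          (algebraMap_smul ℂ _ _).symm,
        smul_smul, ← Complex.ofReal_mul, mul_inv_cancel₀ hne, Complex.ofReal_one, one_smul]
  -- each y s has norm 1 coordinatewise
  have hynorm : ∀ s, ∑ j, ‖y s j‖ ^ 2 = 1 := by
    intro s
    have h1 : ‖y s‖ = 1 := hy.1 s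
    rw [EuclideanSpace.norm_eq] at h1
    have h2 : ∑ j, ‖y s j‖ ^ 2 = (Real.sqrt (∑ j, ‖y s j‖ ^ 2)) ^ 2 :=
      (Real.sq_sqrt (Finset.sum_nonneg fun j _ => sq_nonneg _)).symm
    rw [h2, h1, one_pow]
  set Tlo := Finset.univ.filter (fun s : Fin m => (s : ℕ) < ℓ) with hTlo
  set Thi := Finset.univ.filter (fun s : Fin m => ℓ ≤ (s : ℕ)) with hThi
  -- norms of partial expansions of a j
  have hpart : ∀ (T : Finset (Fin m)),
      ∑ j, ‖∑ s ∈ T, (starRingEnd ℂ) (y s j) • b s‖ ^ 2 = ∑ s ∈ T, lam s := by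
    intro T
    have h1 : ∀ j, ‖∑ s ∈ T, (starRingEnd ℂ) (y s j) • b s‖ ^ 2
        = ∑ s ∈ T, ‖y s j‖ ^ 2 * lam s := by
      intro j
      rw [hnorm T _]
      exact Finset.sum_congr rfl fun s _ => by rw [RCLike.norm_conj]
    rw [Finset.sum_congr rfl fun j _ => h1 j, Finset.sum_comm]
    refine Finset.sum_congr rfl fun s _ => ?_
    rw [← Finset.sum_mul, hynorm s, one_mul]
  -- total sum of eigenvalues
  have htot : ∑ j, ‖a j‖ ^ 2 = ∑ s, lam s := by
    rw [← hpart Finset.univ]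
    exact Finset.sum_congr rfl fun j _ => by rw [← haexp j]
  -- splitting of the index set
  have hsplitf : ∀ f : Fin m → ℝ, ∑ s, f s = ∑ s ∈ Tlo, f s + ∑ s ∈ Thi, f s := by
    intro f
    rw [hTlo, hThi, ← Finset.sum_filter_add_sum_filter_not Finset.univ
      (fun s : Fin m => (s : ℕ) < ℓ) f]
    congr 1
    apply Finset.sum_congr _ fun _ _ => rfl
    apply Finset.filter_congr
    intro s _
    simp [not_lt]
  have hsplit : ∑ s, lam s = ∑ s ∈ Tlo, lam s + ∑ s ∈ Thi, lam s := hsplitf lam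
  -- cardinality of the low part
  have hcard : Tlo.card = ℓ := by
    have hmap : Tlo = Finset.univ.map ((Fin.castLEEmb hℓm) : Fin ℓ ↪ Fin m) := by
      ext s
      simp only [hTlo, Finset.mem_filter, Finset.mem_univ, true_and, Finset.mem_map]
      constructor
      · intro hs
        exact ⟨⟨(s : ℕ), hs⟩, by apply Fin.ext; simp⟩
      · rintro ⟨i, rfl⟩
        simpa using i.2
    rw [hmap, Finset.card_map, Finset.card_univ, Fintype.card_fin]
  -- the special subspace K
  set K := (Submodule.span ℂ (Set.range fun s : Fin ℓ => q (Fin.castLE hℓm s))) with hK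
  have hKq : ∀ s : Fin m, (s : ℕ) < ℓ → q s ∈ K := by
    intro s hs
    apply Submodule.subset_span
    exact ⟨⟨(s : ℕ), hs⟩, rfl⟩
  have hKb : ∀ s : Fin m, (s : ℕ) < ℓ → b s ∈ K := fun s hs => by
    rw [hbq s]; exact K.smul_mem _ (hKq s hs)
  -- q t is orthogonal to combinations of b s for s ≠ t
  have hqb : ∀ t : Fin m, ∀ (T : Finset (Fin m)) (c : Fin m → ℂ), t ∉ T →
      ⟪q t, ∑ s ∈ T, c s • b s⟫_ℂ = 0 := by
    intro t T c htT
    by_cases h0 : lam t = 0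
    · rw [hq t]; simp [h0]
    · have hqt : q t = ((((Real.sqrt (lam t))⁻¹ : ℝ)) : ℂ) • b t := by
        rw [hq t]
        simp only [h0, if_false]
        rw [show (((Real.sqrt (lam t))⁻¹ : ℝ) • (∑ k, y t k • a k) : H)
              = ((((Real.sqrt (lam t))⁻¹ : ℝ) : ℂ)) • (∑ k, y t k • a k) from
            (algebraMap_smul ℂ _ _).symm]
      have h2 := hcombo {t} T (fun _ => 1) c
      rw [Finset.singleton_inter_of_notMem htT] at h2
      simp only [Finset.sum_singleton, one_smul, Finset.sum_empty] at h2
      rw [hqt, inner_smul_left, h2, mul_zero]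
  -- vectors orthogonal to K
  have hperp : ∀ (T : Finset (Fin m)) (c : Fin m → ℂ),
      (∀ t : Fin m, (t : ℕ) < ℓ → t ∉ T) →
      ∀ u ∈ K, ⟪u, ∑ s ∈ T, c s • b s⟫_ℂ = 0 := by
    intro T c hT u hu
    rw [hK] at hu
    induction hu using Submodule.span_induction with
    | mem x hx =>
        obtain ⟨i, rfl⟩ := hx
        exact hqb _ T c (hT _ (by simp))
    | zero => simp
    | add x z hx hz ihx ihz => rw [inner_add_left, ihx, ihz, add_zero]
    | smul r x hx ihx => rw [inner_smul_left, ihx, mul_zero]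
  -- decomposition of a j
  have hdecomp : ∀ j, a j = (∑ s ∈ Tlo, (starRingEnd ℂ) (y s j) • b s)
      + ∑ s ∈ Thi, (starRingEnd ℂ) (y s j) • b s := by
    intro j
    rw [haexp j, hTlo, hThi, ← Finset.sum_filter_add_sum_filter_not Finset.univ
      (fun s : Fin m => (s : ℕ) < ℓ)]
    congr 1
    apply Finset.sum_congr _ fun _ _ => rfl
    apply Finset.filter_congr
    intro s _
    simp [not_lt]
  -- distance to K
  have hinf2 : ∀ j, Metric.infDist (a j) (K : Set H)
      = ‖∑ s ∈ Thi, (starRingEnd ℂ) (y s j) • b s‖ := by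
    intro j
    refine stmt6_infDist_eq K (a j) _ (∑ s ∈ Tlo, (starRingEnd ℂ) (y s j) • b s) ?_
      (hdecomp j) ?_
    · exact Submodule.sum_mem K fun s hs => K.smul_mem _
        (hKb s (by simpa [hTlo] using hs))
    · exact hperp Thi _ (fun t ht => by
        simp only [hThi, Finset.mem_filter, Finset.mem_univ, true_and, not_le]
        exact ht)
  have part2 : ∑ j, (Metric.infDist (a j) (K : Set H)) ^ 2 = ∑ s ∈ Thi, lam s := by
    rw [Finset.sum_congr rfl fun j _ => by rw [hinf2 j]]
    exact hpart Thi
  refine ⟨?_, part2⟩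
  -- ============ the lower bound ============
  intro S hrank
  haveI hfd : FiniteDimensional ℂ S :=
    Module.rank_lt_aleph0_iff.mp (lt_of_le_of_lt hrank (Cardinal.nat_lt_aleph0 ℓ))
  have hfr : Module.finrank ℂ S ≤ ℓ := Module.finrank_le_of_rank_le hrank
  set e := stdOrthonormalBasis ℂ S with he
  have hproj : ∀ x : H, x - (S.orthogonalProjectionOnto x : H) ∈ Sᗮ := fun x =>
    Submodule.sub_starProjection_mem_orthogonal (K := S) x
  have hinf1 : ∀ x : H, Metric.infDist x (S : Set H)
      = ‖x - (S.orthogonalProjectionOnto x : H)‖ := by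
    intro x
    refine stmt6_infDist_eq S x _ (S.orthogonalProjectionOnto x : H) (SetLike.coe_mem _)
      (by abel) ?_
    intro u hu
    exact (Submodule.mem_orthogonal S _).mp (hproj x) u hu
  have hpyth : ∀ x : H, ‖x - (S.orthogonalProjectionOnto x : H)‖ ^ 2
      = ‖x‖ ^ 2 - ‖(S.orthogonalProjectionOnto x : H)‖ ^ 2 := by
    intro x
    have horth : ⟪(S.orthogonalProjectionOnto x : H), x - (S.orthogonalProjectionOnto x : H)⟫_ℂ = 0 :=
      (Submodule.mem_orthogonal S _).mp (hproj x) _ (SetLike.coe_mem _)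
    have h1 := norm_add_sq_eq_norm_sq_add_norm_sq_of_inner_eq_zero _ _ horth
    rw [show (S.orthogonalProjectionOnto x : H) + (x - (S.orthogonalProjectionOnto x : H)) = x by
      abel] at h1
    ring_nf
    ring_nf at h1
    linarith
  -- Parseval for the projection
  have hPsum : ∀ x : H, ‖(S.orthogonalProjectionOnto x : H)‖ ^ 2
      = ∑ i, ‖⟪((e i : S) : H), x⟫_ℂ‖ ^ 2 := by
    intro x
    have h1 : ‖(S.orthogonalProjectionOnto x : H)‖ = ‖e.repr (S.orthogonalProjectionOnto x)‖ := by
      rw [LinearIsometryEquiv.norm_map]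
      rfl
    rw [h1, EuclideanSpace.norm_eq, Real.sq_sqrt (Finset.sum_nonneg fun i _ => sq_nonneg _)]
    refine Finset.sum_congr rfl fun i _ => ?_
    rw [OrthonormalBasis.repr_apply_apply, Submodule.inner_orthogonalProjectionOnto_eq_of_mem_left]
  -- the coerced basis of S is orthonormal in H
  have he' : Orthonormal ℂ (fun i => ((e i : S) : H)) := by
    rw [orthonormal_iff_ite]
    intro i j
    rw [← Submodule.coe_inner]
    exact orthonormal_iff_ite.mp e.orthonormal i j
  -- rows: sum over j equals sum over s
  have hrow : ∀ i, ∑ j, ‖⟪((e i : S) : H), a j⟫_ℂ‖ ^ 2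
      = ∑ s, ‖⟪((e i : S) : H), b s⟫_ℂ‖ ^ 2 := by
    intro i
    set c : Fin m → ℂ := fun s => ⟪((e i : S) : H), b s⟫_ℂ with hc
    set w : EuclideanSpace ℂ (Fin m) := ∑ s, (starRingEnd ℂ) (c s) • y s with hw
    have hwj : ∀ j, ⟪((e i : S) : H), a j⟫_ℂ = (starRingEnd ℂ) (w j) := by
      intro j
      have hwj' : w j = ∑ s, (starRingEnd ℂ) (c s) * y s j := by
        rw [hw]
        rw [show ((∑ s, (starRingEnd ℂ) (c s) • y s : EuclideanSpace ℂ (Fin m)) j)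
            = ∑ s, ((starRingEnd ℂ) (c s) • y s) j by rw [WithLp.ofLp_sum, Finset.sum_apply]]
        exact Finset.sum_congr rfl fun s _ => rfl
      rw [haexp j, inner_sum, hwj', map_sum]
      refine Finset.sum_congr rfl fun s _ => ?_
      rw [inner_smul_right, RingHom.map_mul, starRingEnd_self_apply]
      ring
    calc ∑ j, ‖⟪((e i : S) : H), a j⟫_ℂ‖ ^ 2
        = ∑ j, ‖w j‖ ^ 2 := by
          refine Finset.sum_congr rfl fun j _ => ?_
          rw [hwj j, RCLike.norm_conj]
      _ = ‖w‖ ^ 2 := by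
          rw [EuclideanSpace.norm_eq, Real.sq_sqrt (Finset.sum_nonneg fun j _ => sq_nonneg _)]
      _ = ∑ s, ‖c s‖ ^ 2 := by
          rw [norm_sq_eq_re_inner (𝕜 := ℂ), hw, hy.inner_sum, map_sum]
          refine Finset.sum_congr rfl fun s _ => ?_
          rw [starRingEnd_self_apply, Complex.mul_conj', ← Complex.ofReal_pow]
          exact Complex.ofReal_re _
  -- q in terms of b
  have hq' : ∀ t, lam t ≠ 0 → q t = ((((Real.sqrt (lam t))⁻¹ : ℝ)) : ℂ) • b t := by
    intro t h0
    rw [hq t]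
    simp only [h0, if_false]
    rw [show (((Real.sqrt (lam t))⁻¹ : ℝ) • (∑ k, y t k • a k) : H)
          = ((((Real.sqrt (lam t))⁻¹ : ℝ) : ℂ)) • (∑ k, y t k • a k) from
        (algebraMap_smul ℂ _ _).symm]
  have hbnorm : ∀ s, ‖b s‖ ^ 2 = lam s := by
    intro s
    have := hnorm {s} (fun _ => 1)
    simpa using this
  have hqnorm : ∀ s, ‖q s‖ ^ 2 ≤ 1 := by
    intro s
    by_cases h0 : lam s = 0
    · rw [hq s]; simp [h0]
    · have hlpos : 0 < lam s := lt_of_le_of_ne (hnonneg s) (Ne.symm h0)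
      rw [hq' s h0, norm_smul, mul_pow, hbnorm s]
      rw [show ‖((((Real.sqrt (lam s))⁻¹ : ℝ)) : ℂ)‖ = |(Real.sqrt (lam s))⁻¹| from
        (Complex.norm_real _).trans (Real.norm_eq_abs _)]
      rw [sq_abs, inv_pow, Real.sq_sqrt (hnonneg s), inv_mul_cancel₀ h0]
  -- the nonzero q's are orthonormal
  have hqorth : Orthonormal ℂ (fun s : {s : Fin m // lam s ≠ 0} => q (s : Fin m)) := by
    rw [orthonormal_iff_ite]
    rintro ⟨s, hs⟩ ⟨t, ht⟩
    rw [hq' s hs, hq' t ht, inner_smul_left, inner_smul_right, hbb, Complex.conj_ofReal]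
    rcases eq_or_ne s t with rfl | hst
    · rw [if_pos rfl, if_pos rfl]
      have hreal : ((Real.sqrt (lam s))⁻¹ * ((Real.sqrt (lam s))⁻¹ * lam s) : ℝ) = 1 := by
        rw [← mul_assoc, ← mul_inv, Real.mul_self_sqrt (hnonneg s), inv_mul_cancel₀ hs]
      rw [← Complex.ofReal_mul, ← Complex.ofReal_mul, hreal, Complex.ofReal_one]
    · simp [hst, Subtype.mk_eq_mk]
  -- Bessel inequalities
  have hbessel2 : ∀ s, ∑ i, ‖⟪((e i : S) : H), q s⟫_ℂ‖ ^ 2 ≤ 1 :=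
    fun s => le_trans (he'.sum_inner_products_le (q s)) (hqnorm s)
  have hbessel1 : ∀ i, ∑ s, ‖⟪((e i : S) : H), q s⟫_ℂ‖ ^ 2 ≤ 1 := by
    intro i
    have hfil : ∑ s ∈ Finset.univ.filter (fun s => lam s ≠ 0), ‖⟪((e i : S) : H), q s⟫_ℂ‖ ^ 2
        = ∑ s, ‖⟪((e i : S) : H), q s⟫_ℂ‖ ^ 2 := by
      apply Finset.sum_filter_of_ne
      intro s _ hf
      by_contra hcon
      exact hf (by rw [hq s]; simp [hcon])
    rw [← hfil]
    have hsub : ∑ s ∈ Finset.univ.filter (fun s => lam s ≠ 0), ‖⟪((e i : S) : H), q s⟫_ℂ‖ ^ 2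
        = ∑ s : {s : Fin m // lam s ≠ 0}, ‖⟪((e i : S) : H), q (s : Fin m)⟫_ℂ‖ ^ 2 :=
      Finset.sum_subtype _ (fun x => by simp) _
    rw [hsub]
    calc ∑ s : {s : Fin m // lam s ≠ 0}, ‖⟪((e i : S) : H), q (s : Fin m)⟫_ℂ‖ ^ 2
        = ∑ s : {s : Fin m // lam s ≠ 0}, ‖⟪q (s : Fin m), ((e i : S) : H)⟫_ℂ‖ ^ 2 :=
          Finset.sum_congr rfl fun s _ => by rw [norm_inner_symm]
      _ ≤ ‖((e i : S) : H)‖ ^ 2 := hqorth.sum_inner_products_le _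
      _ = 1 := by rw [show ‖((e i : S) : H)‖ = 1 from he'.1 i, one_pow]
  have hblow : ∀ i s, ‖⟪((e i : S) : H), b s⟫_ℂ‖ ^ 2
      = lam s * ‖⟪((e i : S) : H), q s⟫_ℂ‖ ^ 2 := by
    intro i s
    rw [hbq s, inner_smul_right, norm_mul, mul_pow]
    rw [show ‖((Real.sqrt (lam s) : ℝ) : ℂ)‖ = |Real.sqrt (lam s)| from (Complex.norm_real _).trans (Real.norm_eq_abs _)]
    rw [sq_abs, Real.sq_sqrt (hnonneg s)]
  -- the projection mass is at most the top eigenvalues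
  have hPle : ∑ j, ‖(S.orthogonalProjectionOnto (a j) : H)‖ ^ 2 ≤ ∑ s ∈ Tlo, lam s := by
    have h1 : ∑ j, ‖(S.orthogonalProjectionOnto (a j) : H)‖ ^ 2
        = ∑ s, lam s * ∑ i, ‖⟪((e i : S) : H), q s⟫_ℂ‖ ^ 2 := by
      calc ∑ j, ‖(S.orthogonalProjectionOnto (a j) : H)‖ ^ 2
          = ∑ j, ∑ i, ‖⟪((e i : S) : H), a j⟫_ℂ‖ ^ 2 :=
            Finset.sum_congr rfl fun j _ => hPsum (a j)
        _ = ∑ i, ∑ j, ‖⟪((e i : S) : H), a j⟫_ℂ‖ ^ 2 := Finset.sum_comm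
        _ = ∑ i, ∑ s, ‖⟪((e i : S) : H), b s⟫_ℂ‖ ^ 2 :=
            Finset.sum_congr rfl fun i _ => hrow i
        _ = ∑ i, ∑ s, lam s * ‖⟪((e i : S) : H), q s⟫_ℂ‖ ^ 2 :=
            Finset.sum_congr rfl fun i _ => Finset.sum_congr rfl fun s _ => hblow i s
        _ = ∑ s, ∑ i, lam s * ‖⟪((e i : S) : H), q s⟫_ℂ‖ ^ 2 := Finset.sum_comm
        _ = ∑ s, lam s * ∑ i, ‖⟪((e i : S) : H), q s⟫_ℂ‖ ^ 2 :=
            Finset.sum_congr rfl fun s _ => (Finset.mul_sum _ _ _).symm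
    rw [h1]
    set u : Fin m → ℝ := fun s => ∑ i, ‖⟪((e i : S) : H), q s⟫_ℂ‖ ^ 2 with hu
    have hu0 : ∀ s, 0 ≤ u s := fun s => Finset.sum_nonneg fun i _ => sq_nonneg _
    have hu1 : ∀ s, u s ≤ 1 := hbessel2
    have husum : ∑ s, u s ≤ (ℓ : ℝ) := by
      calc ∑ s, u s = ∑ i, ∑ s, ‖⟪((e i : S) : H), q s⟫_ℂ‖ ^ 2 := Finset.sum_comm
        _ ≤ ∑ _i : Fin (Module.finrank ℂ S), (1:ℝ) :=
            Finset.sum_le_sum fun i _ => hbessel1 i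
        _ = (Module.finrank ℂ S : ℝ) := by simp
        _ ≤ (ℓ : ℝ) := by exact_mod_cast hfr
    set cV : ℝ := if h : ℓ < m then lam ⟨ℓ, h⟩ else 0 with hcV
    have hc0 : 0 ≤ cV := by
      rw [hcV]; split
      · exact hnonneg _
      · exact le_refl 0
    have hclo : ∀ s ∈ Tlo, cV ≤ lam s := by
      intro s hs
      have hsl : (s : ℕ) < ℓ := by simpa [hTlo] using hs
      rw [hcV]; split
      · next h => exact hdec (show s ≤ (⟨ℓ, h⟩ : Fin m) from le_of_lt hsl)
      · exact hnonneg s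
    have hchi : ∀ s ∈ Thi, lam s ≤ cV := by
      intro s hs
      have hls : ℓ ≤ (s : ℕ) := by simpa [hThi] using hs
      have hlm : ℓ < m := lt_of_le_of_lt hls s.isLt
      rw [hcV, dif_pos hlm]
      exact hdec (show (⟨ℓ, hlm⟩ : Fin m) ≤ s from hls)
    have e1 : ∑ s ∈ Tlo, lam s * u s ≤ ∑ s ∈ Tlo, (lam s + cV * (u s - 1)) := by
      refine Finset.sum_le_sum fun s hs => ?_
      have h2 : lam s * (u s - 1) ≤ cV * (u s - 1) :=
        mul_le_mul_of_nonpos_right (hclo s hs) (sub_nonpos.mpr (hu1 s))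
      nlinarith [h2]
    have e2 : ∑ s ∈ Thi, lam s * u s ≤ ∑ s ∈ Thi, cV * u s :=
      Finset.sum_le_sum fun s hs => mul_le_mul_of_nonneg_right (hchi s hs) (hu0 s)
    have e3 : ∑ s ∈ Tlo, (lam s + cV * (u s - 1))
        = ∑ s ∈ Tlo, lam s + (cV * ∑ s ∈ Tlo, u s - cV * ℓ) := by
      rw [Finset.sum_add_distrib, ← Finset.mul_sum, Finset.sum_sub_distrib,
        Finset.sum_const, hcard, mul_sub]
      simp [nsmul_eq_mul]
    have e4 : ∑ s ∈ Thi, cV * u s = cV * ∑ s ∈ Thi, u s := (Finset.mul_sum _ _ _).symm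
    have e5 : ∑ s ∈ Tlo, u s + ∑ s ∈ Thi, u s = ∑ s, u s := (hsplitf u).symm
    have e6 : ∑ s, lam s * u s
        = ∑ s ∈ Tlo, lam s * u s + ∑ s ∈ Thi, lam s * u s := hsplitf _
    have e7 : cV * ∑ s ∈ Tlo, u s - cV * ℓ + cV * ∑ s ∈ Thi, u s ≤ 0 := by
      have h8 : cV * (∑ s, u s) ≤ cV * (ℓ : ℝ) := mul_le_mul_of_nonneg_left husum hc0
      rw [← e5, mul_add] at h8
      linarith
    linarith [e1, e2, e6, e3, e4, e7]
  -- final assembly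
  have hfinal : ∑ j, (Metric.infDist (a j) (S : Set H)) ^ 2
      = ∑ j, ‖a j‖ ^ 2 - ∑ j, ‖(S.orthogonalProjectionOnto (a j) : H)‖ ^ 2 := by
    rw [← Finset.sum_sub_distrib]
    refine Finset.sum_congr rfl fun j _ => ?_
    rw [hinf1 (a j), hpyth (a j)]
  rw [hfinal, htot, hsplit]
  linarith [hPle]
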